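/- Let k be an algebraically closed field of characteristic 2. The plane cubic x^3 + y^2 z + x y z = 0 in P^2 is an irreducible nodal curve: it has a unique singular point, and that singularity is a node. -/

import Mathlib

open MvPolynomial

section NodalAux
variable (k : Type*) [Field k]


lemma prime_X0' : Prime (X 0 : MvPolynomial (Fin 2) k) := by
  have h := MulEquiv.prime_iff (p := (X 0 : MvPolynomial (Fin 2) k))
    (MvPolynomial.finSuccEquiv k 1).toMulEquiv
  rw [← h]
  have : (MvPolynomial.finSuccEquiv k 1).toMulEquiv (X 0) = Polynomial.X :=
    finSuccEquiv_X_zero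
  rw [this]
  exact Polynomial.prime_X

lemma unit_of_dvd' (r : MvPolynomial (Fin 2) k)
    (h1 : r ∣ X 0 ^ 3) (h2 : r ∣ (X 1 ^ 2 + X 0 * X 1 : MvPolynomial (Fin 2) k)) :
    IsUnit r := by
  obtain ⟨i, hi, hassoc⟩ := (dvd_prime_pow (prime_X0' k) 3).mp h1
  rcases Nat.eq_zero_or_pos i with h0 | hpos
  · subst h0
    exact associated_one_iff_isUnit.mp (by simpa using hassoc)
  · exfalso
    have hX0r : (X 0 : MvPolynomial (Fin 2) k) ∣ r :=
      dvd_trans (dvd_pow_self _ hpos.ne') hassoc.symm.dvd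
    have hX0b : (X 0 : MvPolynomial (Fin 2) k) ∣ X 1 ^ 2 + X 0 * X 1 := hX0r.trans h2
    have hX0sq : (X 0 : MvPolynomial (Fin 2) k) ∣ X 1 ^ 2 := by
      have : (X 1 ^ 2 : MvPolynomial (Fin 2) k) = (X 1 ^ 2 + X 0 * X 1) - X 0 * X 1 := by ring
      rw [this]
      exact dvd_sub hX0b (Dvd.intro _ rfl)
    obtain ⟨c, hc⟩ := hX0sq
    have := congrArg (aeval (![0, X 1] : Fin 2 → MvPolynomial (Fin 2) k)) hc
    simp at this

lemma irred_q' :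
    Irreducible (Polynomial.C (X 0 ^ 3 : MvPolynomial (Fin 2) k) +
      Polynomial.C (X 1 ^ 2 + X 0 * X 1 : MvPolynomial (Fin 2) k) * Polynomial.X) := by
  set a : MvPolynomial (Fin 2) k := X 0 ^ 3 with ha
  set b : MvPolynomial (Fin 2) k := X 1 ^ 2 + X 0 * X 1 with hb
  have hbne : b ≠ 0 := by
    intro h
    have := congrArg (aeval (![0, 1] : Fin 2 → k)) h
    simp [hb] at this
  set q : Polynomial (MvPolynomial (Fin 2) k) := Polynomial.C a + Polynomial.C b * Polynomial.X with hq
  have hdeg : q.natDegree = 1 := by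
    rw [hq, add_comm]
    
    exact Polynomial.natDegree_linear hbne
  have hqne : q ≠ 0 := fun h => by simp [h] at hdeg
  have key : ∀ u : Polynomial (MvPolynomial (Fin 2) k), u.natDegree = 0 → u ∣ q → IsUnit u := by
    intro u hu hdvd
    obtain ⟨r, rfl⟩ := Polynomial.natDegree_eq_zero.mp hu
    rw [Polynomial.isUnit_C]
    have hr := (Polynomial.C_dvd_iff_dvd_coeff r q).mp hdvd
    have h0 : r ∣ a := by simpa [hq, Polynomial.coeff_add, Polynomial.coeff_C] using hr 0
    have h1 : r ∣ b := by simpa [hq, Polynomial.coeff_add, Polynomial.coeff_C] using hr 1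
    exact unit_of_dvd' k r (ha ▸ h0) (hb ▸ h1)
  constructor
  · exact Polynomial.not_isUnit_of_natDegree_pos q (by omega)
  · intro u v huv
    have hu0 : u ≠ 0 := fun h => hqne (by simp [huv, h])
    have hv0 : v ≠ 0 := fun h => hqne (by simp [huv, h])
    have : u.natDegree + v.natDegree = 1 := by
      rw [← Polynomial.natDegree_mul hu0 hv0, ← huv, hdeg]
    rcases Nat.eq_zero_or_pos u.natDegree with h | h
    · exact Or.inl (key u h ⟨v, huv⟩)
    · exact Or.inr (key v (by omega) ⟨u, by rw [huv, mul_comm]⟩)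

def cyc3 : Fin 3 ≃ Fin 3 where
  toFun := ![1, 2, 0]
  invFun := ![2, 0, 1]
  left_inv := by decide
  right_inv := by decide

lemma irred_F' :
    Irreducible (X 0 ^ 3 + X 1 ^ 2 * X 2 + X 0 * X 1 * X 2 : MvPolynomial (Fin 3) k) := by
  set φ := (renameEquiv k cyc3).trans (MvPolynomial.finSuccEquiv k 2) with hφ
  have h := MulEquiv.irreducible_iff
    (x := (X 0 ^ 3 + X 1 ^ 2 * X 2 + X 0 * X 1 * X 2 : MvPolynomial (Fin 3) k))
    φ.toMulEquiv
  rw [← h]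
  have e0 : φ (X 0) = Polynomial.C (X 0) := by
    simp [hφ, cyc3]
    have : ((1 : Fin 3)) = (0 : Fin 2).succ := rfl
    rw [this, finSuccEquiv_X_succ]
  have e1 : φ (X 1) = Polynomial.C (X 1) := by
    simp [hφ, cyc3]
    have : ((2 : Fin 3)) = (1 : Fin 2).succ := rfl
    rw [this, finSuccEquiv_X_succ]
  have e2 : φ (X 2) = Polynomial.X := by
    simp [hφ, cyc3]
    exact finSuccEquiv_X_zero
  have himg : φ.toMulEquiv (X 0 ^ 3 + X 1 ^ 2 * X 2 + X 0 * X 1 * X 2 : MvPolynomial (Fin 3) k) =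
      Polynomial.C (X 0 ^ 3 : MvPolynomial (Fin 2) k) +
        Polynomial.C (X 1 ^ 2 + X 0 * X 1 : MvPolynomial (Fin 2) k) * Polynomial.X := by
    show φ _ = _
    rw [map_add, map_add, map_mul, map_mul, map_mul, map_pow, map_pow, e0, e1, e2]
    push_cast [map_add, map_mul, map_pow]
    ring
  rw [himg]
  exact irred_q' k

lemma sing_pts [CharP k 2] (p : Fin 3 → k) (hp : p ≠ 0) :
    ((eval p (X 0 ^ 3 + X 1 ^ 2 * X 2 + X 0 * X 1 * X 2 : MvPolynomial (Fin 3) k) = 0 ∧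
        ∀ i, eval p (pderiv i
          (X 0 ^ 3 + X 1 ^ 2 * X 2 + X 0 * X 1 * X 2 : MvPolynomial (Fin 3) k)) = 0) ↔
      ∃ t : k, t ≠ 0 ∧ p = t • ![0, 0, 1]) := by
  have h2 : (2 : k) = 0 := by exact_mod_cast CharP.cast_eq_zero k 2
  constructor
  · rintro ⟨he, hd⟩
    have hd0 := hd 0
    have hd1 := hd 1
    have hd2 := hd 2
    simp [pderiv_X, Pi.single_apply] at hd0 hd1 hd2
    have hd1' : p 2 * p 0 = 0 := by linear_combination hd1 - p 1 * p 2 * h2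
    have hd0' : p 0 ^ 2 + p 2 * p 1 = 0 := by linear_combination hd0 - p 0 ^ 2 * h2
    rcases mul_eq_zero.mp hd1' with hc | hc
    · -- p 2 = 0
      exfalso
      have h0 : p 0 = 0 := by
        have : p 0 ^ 2 = 0 := by linear_combination hd0' - p 1 * hc
        exact pow_eq_zero_iff (two_ne_zero) |>.mp this
      have h1 : p 1 = 0 := by
        have : p 1 ^ 2 = 0 := by linear_combination hd2 - p 1 * h0
        exact pow_eq_zero_iff (two_ne_zero) |>.mp this
      exact hp (funext fun i => by fin_cases i <;> simp [h0, h1, hc])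
    · -- p 0 = 0
      have h1 : p 1 = 0 := by
        have : p 1 ^ 2 = 0 := by linear_combination hd2 - p 1 * hc
        exact pow_eq_zero_iff (two_ne_zero) |>.mp this
      have h2' : p 2 ≠ 0 := by
        intro h22
        exact hp (funext fun i => by fin_cases i <;> simp [hc, h1, h22])
      exact ⟨p 2, h2', funext fun i => by fin_cases i <;> simp [hc, h1]⟩
  · rintro ⟨t, ht, rfl⟩
    constructor
    · simp [h2]
    · intro i
      fin_cases i <;> simp [pderiv_X, Pi.single_apply, h2]

lemma chart_eq :
    (aeval ![X 0, X 1, 1]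
      (X 0 ^ 3 + X 1 ^ 2 * X 2 + X 0 * X 1 * X 2 : MvPolynomial (Fin 3) k) :
      MvPolynomial (Fin 2) k) =
    (X 0 ^ 3 : MvPolynomial (Fin 2) k) + (X 1 ^ 2 + X 0 * X 1) := by
  simp
  ring

lemma hom3 : ((X 0 ^ 3 : MvPolynomial (Fin 2) k)).IsHomogeneous 3 := by
  simpa using (isHomogeneous_X k (0 : Fin 2)).pow 3

lemma hom2 : ((X 1 ^ 2 + X 0 * X 1 : MvPolynomial (Fin 2) k)).IsHomogeneous 2 := by
  have h1 : ((X 1 ^ 2 : MvPolynomial (Fin 2) k)).IsHomogeneous 2 := by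
    simpa using (isHomogeneous_X k (1 : Fin 2)).pow 2
  have h2 : ((X 0 * X 1 : MvPolynomial (Fin 2) k)).IsHomogeneous 2 :=
    (isHomogeneous_X k (0 : Fin 2)).mul (isHomogeneous_X k (1 : Fin 2))
  exact h1.add h2

lemma part3 [CharP k 2] :
    (homogeneousComponent 0
        (aeval ![X 0, X 1, 1]
          (X 0 ^ 3 + X 1 ^ 2 * X 2 + X 0 * X 1 * X 2 : MvPolynomial (Fin 3) k) :
          MvPolynomial (Fin 2) k) = 0 ∧
      homogeneousComponent 1
        (aeval ![X 0, X 1, 1]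
          (X 0 ^ 3 + X 1 ^ 2 * X 2 + X 0 * X 1 * X 2 : MvPolynomial (Fin 3) k) :
          MvPolynomial (Fin 2) k) = 0 ∧
      ∃ L₁ L₂ : MvPolynomial (Fin 2) k, L₁.IsHomogeneous 1 ∧ L₂.IsHomogeneous 1 ∧
        (¬ ∃ u : k, L₂ = C u * L₁) ∧
        homogeneousComponent 2
          (aeval ![X 0, X 1, 1]
            (X 0 ^ 3 + X 1 ^ 2 * X 2 + X 0 * X 1 * X 2 : MvPolynomial (Fin 3) k) :
            MvPolynomial (Fin 2) k) = L₁ * L₂) := by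
  rw [chart_eq]
  have hc3 : ∀ n, homogeneousComponent n ((X 0 ^ 3 : MvPolynomial (Fin 2) k)) = if n = 3 then X 0 ^ 3 else 0 := fun n => homogeneousComponent_of_mem ((mem_homogeneousSubmodule _ _).mpr (hom3 k))
  have hc2 : ∀ n, homogeneousComponent n ((X 1 ^ 2 + X 0 * X 1 : MvPolynomial (Fin 2) k)) = if n = 2 then X 1 ^ 2 + X 0 * X 1 else 0 := fun n => homogeneousComponent_of_mem ((mem_homogeneousSubmodule _ _).mpr (hom2 k))
  refine ⟨?_, ?_, X 1, X 0 + X 1, isHomogeneous_X k _, ?_, ?_, ?_⟩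
  · rw [map_add, hc3 0, hc2 0]; simp
  · rw [map_add, hc3 1, hc2 1]; simp
  · exact (isHomogeneous_X k (0 : Fin 2)).add (isHomogeneous_X k (1 : Fin 2))
  · rintro ⟨u, hu⟩
    have := congrArg (aeval (![1, 0] : Fin 2 → k)) hu
    simp at this
  · rw [map_add, hc3 2, hc2 2]
    simp
    ring

end NodalAux


/-- Let `k` be an algebraically closed field of characteristic 2.  The plane cubic
`x³ + y²z + xyz = 0` in `ℙ²` (coordinates `x, y, z` are `X 0, X 1, X 2`) is an
irreducible nodal curve: its equation is irreducible, its unique singular point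
(a nonzero point where the equation and all of its partial derivatives vanish) is
`[0:0:1]`, and that singularity is a node: in the affine chart `z = 1` around the
point, the local equation has no terms of degree `< 2` and its tangent cone (the
degree-2 homogeneous part) is a product of two distinct (non-proportional)
linear forms. -/
theorem nodal_cubic_char2 (k : Type*) [Field k] [IsAlgClosed k] [CharP k 2] :
    Irreducible (X 0 ^ 3 + X 1 ^ 2 * X 2 + X 0 * X 1 * X 2 : MvPolynomial (Fin 3) k) ∧
    (∀ p : Fin 3 → k, p ≠ 0 →
      ((eval p (X 0 ^ 3 + X 1 ^ 2 * X 2 + X 0 * X 1 * X 2 : MvPolynomial (Fin 3) k) = 0 ∧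
          ∀ i, eval p (pderiv i
            (X 0 ^ 3 + X 1 ^ 2 * X 2 + X 0 * X 1 * X 2 : MvPolynomial (Fin 3) k)) = 0) ↔
        ∃ t : k, t ≠ 0 ∧ p = t • ![0, 0, 1])) ∧
    (homogeneousComponent 0
        (aeval ![X 0, X 1, 1]
          (X 0 ^ 3 + X 1 ^ 2 * X 2 + X 0 * X 1 * X 2 : MvPolynomial (Fin 3) k) :
          MvPolynomial (Fin 2) k) = 0 ∧
      homogeneousComponent 1
        (aeval ![X 0, X 1, 1]
          (X 0 ^ 3 + X 1 ^ 2 * X 2 + X 0 * X 1 * X 2 : MvPolynomial (Fin 3) k) :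
          MvPolynomial (Fin 2) k) = 0 ∧
      ∃ L₁ L₂ : MvPolynomial (Fin 2) k, L₁.IsHomogeneous 1 ∧ L₂.IsHomogeneous 1 ∧
        (¬ ∃ u : k, L₂ = C u * L₁) ∧
        homogeneousComponent 2
          (aeval ![X 0, X 1, 1]
            (X 0 ^ 3 + X 1 ^ 2 * X 2 + X 0 * X 1 * X 2 : MvPolynomial (Fin 3) k) :
            MvPolynomial (Fin 2) k) = L₁ * L₂) := by
  exact ⟨irred_F' k, fun p hp => sing_pts k p hp, part3 k⟩
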